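/- In the out-of-distribution setting with shared covariate covariance Σ_x (Σ_x^{(i)} = Σ_x^{(o)} = Σ_x), let f^pre(x) = W^pre x be the pre-trained predictor, B^(o) the OOD regression matrix, and let the S²FT population solution replace W^pre by W^pre + C U_S Vᵀ W_low with C U_S Vᵀ W_low Σ^{1/2} = Π (B^(i) − W^pre) Σ^{1/2}, where Π = Φ''_S Φ''_Sᵀ is the orthogonal projection onto the column space of C U_S and B^(i) Σ^{1/2} lies in the column space reachable through the network. If ‖Π (B^(o) − B^(i)) Σ^{1/2}‖_F² ≤ ε² E^(o)(f^pre), where E^(o)(f^pre) = ‖(B^(o) − W^pre) Σ^{1/2}‖_F², then the OOD excess risk of the S²FT model satisfies E^(o)(f_SFT) ≤ (1 + 3ε²) E^(o)(f^pre). -/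

import Mathlib

open Matrix

/-- Frobenius norm of a real matrix. -/
noncomputable def frobNorm {m n : Type*} [Fintype m] [Fintype n]
    (M : Matrix m n ℝ) : ℝ :=
  Real.sqrt (∑ i, ∑ j, (M i j) ^ 2)

/-- The positive semidefinite square root of a positive semidefinite matrix
(the definition of `Matrix.PosSemidef.sqrt` in the older Mathlib). -/
noncomputable def Matrix.PosSemidef.sqrt {n : Type*} [Fintype n] [DecidableEq n]
    {A : Matrix n n ℝ} (hA : A.PosSemidef) : Matrix n n ℝ :=
  hA.1.eigenvectorUnitary.1 * diagonal ((√·) ∘ hA.1.eigenvalues) *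
  (star hA.1.eigenvectorUnitary : Matrix n n ℝ)

lemma frob_sq {m n : Type*} [Fintype m] [Fintype n] (M : Matrix m n ℝ) :
    frobNorm M ^ 2 = Matrix.trace (Mᵀ * M) := by
  have h1 : (0:ℝ) ≤ ∑ i, ∑ j, (M i j)^2 := by positivity
  rw [frobNorm, Real.sq_sqrt h1, Matrix.trace]
  simp only [Matrix.diag_apply, Matrix.mul_apply, Matrix.transpose_apply]
  rw [Finset.sum_comm]
  simp [pow_two]

lemma frob_sq_add_of_orth {m n : Type*} [Fintype m] [Fintype n]
    (X Y : Matrix m n ℝ) (h : Xᵀ * Y = 0) :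
    frobNorm (X + Y) ^ 2 = frobNorm X ^ 2 + frobNorm Y ^ 2 := by
  have h2 : Yᵀ * X = 0 := by
    have := congrArg Matrix.transpose h
    simpa [Matrix.transpose_mul] using this
  rw [frob_sq, frob_sq, frob_sq]
  simp [Matrix.transpose_add, Matrix.add_mul, Matrix.mul_add, h, h2, Matrix.trace_add]

/-- OOD risk bound for S²FT: if the fine-tuned predictor is
`M = W^pre + Proj (B^(i) − W^pre)` (on the covariance square root), with `Proj` an orthogonal
projection, and the label shift visible through `Proj` is bounded by `ε²` times the OOD
excess risk of the pre-trained model, then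
`E^(o)(f_SFT) ≤ (1 + 3ε²) E^(o)(f^pre)`, where `E^(o)(f) = ‖(B^(o) − M) Σ_x^{1/2}‖_F²`. -/
theorem s2ft_ood_bound (q p : ℕ)
    (Sx : Matrix (Fin p) (Fin p) ℝ) (hS : Sx.PosSemidef)
    (Wpre Bi Bo M : Matrix (Fin q) (Fin p) ℝ)
    (Proj : Matrix (Fin q) (Fin q) ℝ) (hPsym : Projᵀ = Proj) (hPidem : Proj * Proj = Proj)
    (hM : M * hS.sqrt = Wpre * hS.sqrt + Proj * ((Bi - Wpre) * hS.sqrt))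
    (ε : ℝ) (hε : 0 ≤ ε)
    (hshift : frobNorm (Proj * ((Bo - Bi) * hS.sqrt)) ^ 2
        ≤ ε ^ 2 * frobNorm ((Bo - Wpre) * hS.sqrt) ^ 2) :
    frobNorm ((Bo - M) * hS.sqrt) ^ 2
      ≤ (1 + 3 * ε ^ 2) * frobNorm ((Bo - Wpre) * hS.sqrt) ^ 2 := by
  set S := hS.sqrt with hSdef
  set A := (Bo - Wpre) * S with hA
  set D := (Bo - Bi) * S with hD
  have h0 : (1 - Proj) * Proj = 0 := by
    rw [Matrix.sub_mul, Matrix.one_mul, hPidem, sub_self]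
  have horth : ∀ (X Y : Matrix (Fin q) (Fin p) ℝ),
      ((1 - Proj) * X)ᵀ * (Proj * Y) = 0 := by
    intro X Y
    rw [Matrix.transpose_mul, Matrix.transpose_sub, Matrix.transpose_one, hPsym,
      Matrix.mul_assoc, ← Matrix.mul_assoc (1 - Proj) Proj Y, h0, Matrix.zero_mul,
      Matrix.mul_zero]
  have hE : (Bo - M) * S = (1 - Proj) * A + Proj * D := by
    have h1 : (Bo - M) * S = Bo * S - M * S := Matrix.sub_mul _ _ _
    rw [h1, hM, hA, hD]
    simp only [Matrix.sub_mul, Matrix.mul_sub, Matrix.one_mul]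
    abel
  have key : frobNorm ((Bo - M) * S) ^ 2
      = frobNorm ((1 - Proj) * A) ^ 2 + frobNorm (Proj * D) ^ 2 := by
    rw [hE]; exact frob_sq_add_of_orth _ _ (horth A D)
  have hAdec : frobNorm A ^ 2
      = frobNorm ((1 - Proj) * A) ^ 2 + frobNorm (Proj * A) ^ 2 := by
    have hAsum : A = (1 - Proj) * A + Proj * A := by
      simp [Matrix.sub_mul, Matrix.one_mul, sub_add_cancel]
    conv_lhs => rw [hAsum]
    exact frob_sq_add_of_orth _ _ (horth A A)
  have h1 : frobNorm ((1 - Proj) * A) ^ 2 ≤ frobNorm A ^ 2 := by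
    nlinarith [sq_nonneg (frobNorm (Proj * A))]
  have h2 : frobNorm (Proj * D) ^ 2 ≤ ε ^ 2 * frobNorm A ^ 2 := hshift
  rw [key]
  nlinarith [sq_nonneg (frobNorm A), sq_nonneg ε]
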